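/- arXiv:2508.10387 — 2 statements merged into one kernel-verified Lean document; each statement's English description precedes it below -/
import Mathlib

section
/- Under the curvature symmetry hypotheses on A and B, one has ∫_{ℝⁿ₊} E(x) (x·∇U(x)) dx = 0; combined with ∫_{ℝⁿ₊} E U dx = 0 this yields ∫_{ℝⁿ₊} E(x) 𝔧ₙ(x) dx = 0 for 𝔧ₙ := ((2−n)/2) U − x·∇U. -/
set_option maxHeartbeats 1600000

noncomputable section

open Real MeasureTheory

/-- Points of `ℝⁿ` written as `(x̃, xₙ)` with `x̃ ∈ ℝ^{n-1}`. -/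
abbrev Pt (n : ℕ) : Type := (Fin (n - 1) → ℝ) × ℝ

/-- Squared Euclidean norm of the tangential part `x̃`. -/
def nsqT {m : ℕ} (y : Fin m → ℝ) : ℝ := ∑ i, (y i) ^ 2

/-- Tangential partial derivative `∂ᵢ`, `i = 1, …, n-1`. -/
def pdT {n : ℕ} (i : Fin (n - 1)) (f : Pt n → ℝ) (x : Pt n) : ℝ :=
  fderiv ℝ f x (Pi.single i 1, 0)

/-- Normal partial derivative `∂ₙ`. -/
def pdN {n : ℕ} (f : Pt n → ℝ) (x : Pt n) : ℝ :=
  fderiv ℝ f x (0, 1)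

/-- Euclidean Laplacian `Δ = Σᵢ ∂ᵢᵢ + ∂ₙₙ`. -/
def lap {n : ℕ} (f : Pt n → ℝ) (x : Pt n) : ℝ :=
  (∑ i, pdT i (pdT i f) x) + pdN (pdN f) x

/-- The standard bubble
`U(x) = αₙ |K|^{-(n-2)/4} (|x̃|² + (xₙ + 𝔇)² - 1)^{-(n-2)/2}`. -/
def bubble (n : ℕ) (K D : ℝ) (x : Pt n) : ℝ :=
  (4 * (n : ℝ) * ((n : ℝ) - 1)) ^ (((n : ℝ) - 2) / 4) * |K| ^ (-(((n : ℝ) - 2) / 4)) *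
    (nsqT x.1 + (x.2 + D) ^ 2 - 1) ^ (-(((n : ℝ) - 2) / 2))

/-! ### Measure-preserving symmetries of the half-space -/

lemma mp_lin {m : ℕ} (f : (Fin m → ℝ) →ₗ[ℝ] (Fin m → ℝ)) (hf : |LinearMap.det f| = 1) :
    MeasurePreserving (f : (Fin m → ℝ) → (Fin m → ℝ)) volume volume := by
  have hdet : LinearMap.det f ≠ 0 := by
    intro h; rw [h] at hf; simp at hf
  refine ⟨f.continuous_of_finiteDimensional.measurable, ?_⟩
  rw [Real.map_linearMap_volume_pi_eq_smul_volume_pi hdet]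
  rw [abs_inv, hf]
  simp

lemma mp_reflect {m : ℕ} (i : Fin m) :
    MeasurePreserving (fun y : Fin m → ℝ => fun k => if k = i then -y k else y k)
      volume volume := by
  classical
  have hdet : |LinearMap.det (Matrix.toLin'
      (Matrix.diagonal (fun k : Fin m => if k = i then (-1:ℝ) else 1)))| = 1 := by
    rw [LinearMap.det_toLin', Matrix.det_diagonal]
    rw [Finset.prod_ite_eq' Finset.univ i (fun _ => (-1:ℝ))]
    simp
  have h := mp_lin _ hdet
  convert h using 1
  funext y
  funext k
  simp only [Matrix.toLin'_apply, Matrix.mulVec_diagonal]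
  split_ifs <;> ring

lemma mp_perm {m : ℕ} (σ : Equiv.Perm (Fin m)) :
    MeasurePreserving (fun y : Fin m → ℝ => y ∘ σ) volume volume := by
  classical
  have hdet : |LinearMap.det (Matrix.toLin' (σ.permMatrix ℝ))| = 1 := by
    rw [LinearMap.det_toLin', Matrix.det_permutation]
    rcases Int.units_eq_one_or (Equiv.Perm.sign σ) with h | h <;> simp [h]
  have h := mp_lin _ hdet
  convert h using 1
  funext y
  funext k
  simp only [Matrix.toLin'_apply, Equiv.Perm.permMatrix, Matrix.mulVec, Function.comp_apply]
  rw [dotProduct]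
  rw [Finset.sum_eq_single (σ k)]
  · simp [Equiv.toPEquiv]
  · intro b _ hb; simp [Equiv.toPEquiv, hb.symm]
  · simp

lemma setIntegral_comp {m : ℕ} (ψ : (Fin m → ℝ) → (Fin m → ℝ))
    (hinv : ∀ y, ψ (ψ y) = y) (hmp : MeasurePreserving ψ volume volume)
    (F : ((Fin m → ℝ) × ℝ) → ℝ) :
    ∫ x in {x : (Fin m → ℝ) × ℝ | 0 < x.2}, F (ψ x.1, x.2) =
      ∫ x in {x : (Fin m → ℝ) × ℝ | 0 < x.2}, F x := by
  have hφmeas : Measurable (fun x : (Fin m → ℝ) × ℝ => (ψ x.1, x.2)) :=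
    (hmp.measurable.comp measurable_fst).prodMk measurable_snd
  let e : ((Fin m → ℝ) × ℝ) ≃ᵐ ((Fin m → ℝ) × ℝ) :=
    { toFun := fun x => (ψ x.1, x.2)
      invFun := fun x => (ψ x.1, x.2)
      left_inv := fun x => by simp [hinv]
      right_inv := fun x => by simp [hinv]
      measurable_toFun := hφmeas
      measurable_invFun := hφmeas }
  have hφmp : MeasurePreserving (fun x : (Fin m → ℝ) × ℝ => (ψ x.1, x.2)) volume volume := by
    rw [Measure.volume_eq_prod]
    exact hmp.prod (MeasurePreserving.id _)
  have hpre : (fun x : (Fin m → ℝ) × ℝ => (ψ x.1, x.2)) ⁻¹' {x | 0 < x.2} = {x | 0 < x.2} := rfl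
  have := hφmp.setIntegral_preimage_emb e.measurableEmbedding F {x | 0 < x.2}
  rw [hpre] at this
  exact this

lemma offdiag_zero {m : ℕ} (i j : Fin m) (hij : i ≠ j) (w : ℝ → ℝ → ℝ) :
    ∫ x in {x : (Fin m → ℝ) × ℝ | 0 < x.2}, x.1 i * x.1 j * w (nsqT x.1) x.2 = 0 := by
  classical
  set ψ : (Fin m → ℝ) → (Fin m → ℝ) := fun y => fun k => if k = i then -y k else y k with hψ
  have hinv : ∀ y, ψ (ψ y) = y := by
    intro y; funext k; simp only [hψ]; split_ifs <;> ring
  have hnsq : ∀ y, nsqT (ψ y) = nsqT y := by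
    intro y
    unfold nsqT
    refine Finset.sum_congr rfl fun k _ => ?_
    simp only [hψ]; split_ifs <;> ring
  have key := setIntegral_comp ψ hinv (mp_reflect i)
    (fun x => x.1 i * x.1 j * w (nsqT x.1) x.2)
  have hptw : ∀ x : (Fin m → ℝ) × ℝ,
      (ψ x.1) i * (ψ x.1) j * w (nsqT (ψ x.1)) x.2
        = -(x.1 i * x.1 j * w (nsqT x.1) x.2) := by
    intro x
    rw [hnsq]
    simp only [hψ, if_pos rfl, if_neg hij.symm]
    ring
  simp only [hptw] at key
  rw [integral_neg] at key
  linarith [key]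

lemma diag_eq {m : ℕ} (i j : Fin m) (w : ℝ → ℝ → ℝ) :
    ∫ x in {x : (Fin m → ℝ) × ℝ | 0 < x.2}, x.1 i * x.1 i * w (nsqT x.1) x.2 =
      ∫ x in {x : (Fin m → ℝ) × ℝ | 0 < x.2}, x.1 j * x.1 j * w (nsqT x.1) x.2 := by
  classical
  set σ := Equiv.swap i j
  set ψ : (Fin m → ℝ) → (Fin m → ℝ) := fun y => y ∘ σ with hψ
  have hinv : ∀ y, ψ (ψ y) = y := by
    intro y; funext k
    simp [hψ, σ, Function.comp, Equiv.swap_apply_self]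
  have hnsq : ∀ y, nsqT (ψ y) = nsqT y := by
    intro y
    unfold nsqT
    exact Equiv.sum_comp σ (fun k => y k ^ 2)
  have key := setIntegral_comp ψ hinv (mp_perm σ)
    (fun x => x.1 i * x.1 i * w (nsqT x.1) x.2)
  have hptw : ∀ x : (Fin m → ℝ) × ℝ,
      (ψ x.1) i * (ψ x.1) i * w (nsqT (ψ x.1)) x.2
        = x.1 j * x.1 j * w (nsqT x.1) x.2 := by
    intro x
    rw [hnsq]
    simp [hψ, σ, Function.comp, Equiv.swap_apply_left]
  simp only [hptw] at key
  exact key.symm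

lemma sum_B_integral {m : ℕ} (hm : 0 < m) (B : Fin m → Fin m → ℝ)
    (hB2 : ∑ i, B i i = 0) (w : ℝ → ℝ → ℝ)
    (hInt : ∀ i j : Fin m, IntegrableOn
      (fun x : (Fin m → ℝ) × ℝ => x.1 i * x.1 j * w (nsqT x.1) x.2) {x | 0 < x.2}) :
    IntegrableOn (fun x : (Fin m → ℝ) × ℝ =>
        ∑ i, ∑ j, B i j * (x.1 i * x.1 j * w (nsqT x.1) x.2)) {x | 0 < x.2} ∧
    ∫ x in {x : (Fin m → ℝ) × ℝ | 0 < x.2},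
        ∑ i, ∑ j, B i j * (x.1 i * x.1 j * w (nsqT x.1) x.2) = 0 := by
  classical
  have hInt' : ∀ i j : Fin m, IntegrableOn
      (fun x : (Fin m → ℝ) × ℝ => B i j * (x.1 i * x.1 j * w (nsqT x.1) x.2)) {x | 0 < x.2} :=
    fun i j => (hInt i j).const_mul _
  have hIntSum : IntegrableOn (fun x : (Fin m → ℝ) × ℝ =>
      ∑ i, ∑ j, B i j * (x.1 i * x.1 j * w (nsqT x.1) x.2)) {x | 0 < x.2} :=
    integrable_finset_sum _ (fun i _ => integrable_finset_sum _ (fun j _ => hInt' i j))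
  refine ⟨hIntSum, ?_⟩
  rw [integral_finset_sum _ (fun i _ => integrable_finset_sum _ (fun j _ => hInt' i j))]
  have step : ∀ i : Fin m, (∫ x in {x : (Fin m → ℝ) × ℝ | 0 < x.2},
      ∑ j, B i j * (x.1 i * x.1 j * w (nsqT x.1) x.2)) =
      B i i * ∫ x in {x : (Fin m → ℝ) × ℝ | 0 < x.2},
        x.1 ⟨0, hm⟩ * x.1 ⟨0, hm⟩ * w (nsqT x.1) x.2 := by
    intro i
    rw [integral_finset_sum _ (fun j _ => hInt' i j)]
    have : ∀ j : Fin m, (∫ x in {x : (Fin m → ℝ) × ℝ | 0 < x.2},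
        B i j * (x.1 i * x.1 j * w (nsqT x.1) x.2)) =
        if j = i then B i i * ∫ x in {x : (Fin m → ℝ) × ℝ | 0 < x.2},
          x.1 ⟨0, hm⟩ * x.1 ⟨0, hm⟩ * w (nsqT x.1) x.2 else 0 := by
      intro j
      rw [MeasureTheory.integral_const_mul]
      by_cases hji : j = i
      · subst hji
        rw [if_pos rfl, diag_eq j ⟨0, hm⟩ w]
      · rw [if_neg hji, offdiag_zero i j (fun h => hji h.symm) w, mul_zero]
    simp only [this]
    rw [Finset.sum_ite_eq' Finset.univ i]
    simp
  simp only [step]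
  rw [← Finset.sum_mul, hB2, zero_mul]

/-! ### Algebraic identity from the curvature symmetries -/

lemma sum_antisymm {m : ℕ} (d : Fin m → Fin m → ℝ) (h : ∀ i k, d i k = - d k i) :
    ∑ i, ∑ k, d i k = 0 := by
  have h2 : ∑ i, ∑ k, d i k = - ∑ i, ∑ k, d k i := by
    rw [← Finset.sum_neg_distrib]
    refine Finset.sum_congr rfl fun i _ => ?_
    rw [← Finset.sum_neg_distrib]
    exact Finset.sum_congr rfl fun k _ => h i k
  have h3 : (∑ i, ∑ k, d k i) = ∑ i, ∑ k, d i k := Finset.sum_comm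
  rw [h3] at h2
  linarith

lemma alg {m : ℕ} (A : Fin m → Fin m → Fin m → Fin m → ℝ) (B : Fin m → Fin m → ℝ)
    (hA1 : ∀ i k j l, A i k j l = -A k i j l)
    (hA4 : ∀ k l, ∑ i, A i k i l = 0)
    (hB2 : ∑ i, B i i = 0)
    (y : Fin m → ℝ) (t G h : ℝ) :
    ∑ i, ∑ j, ((1/3) * (∑ k, ∑ l, A i k j l * y k * y l) + B i j * t ^ 2) *
        ((if i = j then G else 0) + h * y i * y j)
      = (h * t ^ 2) * ∑ i, ∑ j, B i j * (y i * y j) := by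
  classical
  have expand : ∀ i j : Fin m,
      ((1/3) * (∑ k, ∑ l, A i k j l * y k * y l) + B i j * t ^ 2) *
          ((if i = j then G else 0) + h * y i * y j)
        = (if i = j then ((1/3) * (∑ k, ∑ l, A i k j l * y k * y l) + B i j * t ^ 2) * G else 0)
          + ((1/3) * (∑ k, ∑ l, A i k j l * y k * y l)) * (h * y i * y j)
          + B i j * t ^ 2 * (h * y i * y j) := by
    intro i j
    split_ifs <;> ring
  simp only [expand]
  simp only [Finset.sum_add_distrib]
  have T1 : ∑ i, ∑ j, (if i = j then
      ((1/3) * (∑ k, ∑ l, A i k j l * y k * y l) + B i j * t ^ 2) * G else 0) = 0 := by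
    have inner : ∀ i : Fin m, (∑ j, if i = j then
        ((1/3) * (∑ k, ∑ l, A i k j l * y k * y l) + B i j * t ^ 2) * G else 0)
        = ((1/3) * (∑ k, ∑ l, A i k i l * y k * y l) + B i i * t ^ 2) * G := by
      intro i
      rw [Finset.sum_ite_eq Finset.univ i
        (fun j => ((1/3) * (∑ k, ∑ l, A i k j l * y k * y l) + B i j * t ^ 2) * G)]
      simp
    simp only [inner]
    have split : ∑ i, ((1/3) * (∑ k, ∑ l, A i k i l * y k * y l) + B i i * t ^ 2) * G
        = (1/3) * G * (∑ i, ∑ k, ∑ l, A i k i l * y k * y l) + (∑ i, B i i) * (t ^ 2 * G) := by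
      have e1 : ∀ i : Fin m, ((1/3) * (∑ k, ∑ l, A i k i l * y k * y l) + B i i * t ^ 2) * G
          = (1/3) * G * (∑ k, ∑ l, A i k i l * y k * y l) + B i i * (t ^ 2 * G) := by
        intro i; ring
      simp only [e1]
      rw [Finset.sum_add_distrib, Finset.mul_sum, Finset.sum_mul]
    rw [split, hB2]
    have hz : ∑ i, ∑ k, ∑ l, A i k i l * y k * y l = 0 := by
      rw [Finset.sum_comm]
      have : ∀ k : Fin m, ∑ i, ∑ l, A i k i l * y k * y l = 0 := by
        intro k
        rw [Finset.sum_comm]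
        have : ∀ l : Fin m, ∑ i, A i k i l * y k * y l = 0 := by
          intro l
          have : ∑ i, A i k i l * y k * y l = (∑ i, A i k i l) * (y k * y l) := by
            rw [Finset.sum_mul]
            exact Finset.sum_congr rfl fun i _ => by ring
          rw [this, hA4, zero_mul]
        simp only [this, Finset.sum_const_zero]
      simp only [this, Finset.sum_const_zero]
    rw [hz]
    ring
  have T3 : ∑ i, ∑ j, ((1/3) * (∑ k, ∑ l, A i k j l * y k * y l)) * (h * y i * y j) = 0 := by
    have push : ∀ i j : Fin m, ((1/3) * (∑ k, ∑ l, A i k j l * y k * y l)) * (h * y i * y j)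
        = ∑ k, ∑ l, (1/3) * h * (A i k j l * y k * y l * y i * y j) := by
      intro i j
      rw [Finset.mul_sum, Finset.sum_mul]
      refine Finset.sum_congr rfl fun k _ => ?_
      rw [Finset.mul_sum, Finset.sum_mul]
      refine Finset.sum_congr rfl fun l _ => ?_
      ring
    simp only [push]
    have reorder : ∑ i, ∑ j, ∑ k, ∑ l, (1/3) * h * (A i k j l * y k * y l * y i * y j)
        = ∑ i, ∑ k, ∑ j, ∑ l, (1/3) * h * (A i k j l * y k * y l * y i * y j) := by
      refine Finset.sum_congr rfl fun i _ => ?_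
      exact Finset.sum_comm
    rw [reorder]
    refine sum_antisymm _ ?_
    intro i k
    rw [← Finset.sum_neg_distrib]
    refine Finset.sum_congr rfl fun j _ => ?_
    rw [← Finset.sum_neg_distrib]
    refine Finset.sum_congr rfl fun l _ => ?_
    rw [hA1 i k j l]
    ring
  have T4 : ∑ i, ∑ j, B i j * t ^ 2 * (h * y i * y j)
      = (h * t ^ 2) * ∑ i, ∑ j, B i j * (y i * y j) := by
    rw [Finset.mul_sum]
    refine Finset.sum_congr rfl fun i _ => ?_
    rw [Finset.mul_sum]
    refine Finset.sum_congr rfl fun j _ => ?_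
    ring
  rw [T1, T3, T4]
  ring

/-! ### Explicit derivatives of the bubble -/

def Qf (n : ℕ) (D : ℝ) : Pt n → ℝ := fun x => nsqT x.1 + (x.2 + D) ^ 2 - 1

def coordT {n : ℕ} (i : Fin (n - 1)) : Pt n →L[ℝ] ℝ :=
  (ContinuousLinearMap.proj i).comp (ContinuousLinearMap.fst ℝ (Fin (n-1) → ℝ) ℝ)

def coordN {n : ℕ} : Pt n →L[ℝ] ℝ := ContinuousLinearMap.snd ℝ (Fin (n-1) → ℝ) ℝ

def LQ {n : ℕ} (D : ℝ) (x : Pt n) : Pt n →L[ℝ] ℝ :=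
  (∑ k, (2 * x.1 k) • coordT k) + (2 * (x.2 + D)) • coordN

lemma hasFDerivAt_Q {n : ℕ} (D : ℝ) (x : Pt n) : HasFDerivAt (Qf n D) (LQ D x) x := by
  have h1 : HasFDerivAt (fun x : Pt n => ∑ k, x.1 k ^ 2)
      (∑ k, (2 * x.1 k) • coordT (n := n) k) x := by
    refine HasFDerivAt.fun_sum fun k _ => ?_
    have := (hasDerivAt_pow 2 (x.1 k)).comp_hasFDerivAt x
      ((coordT (n := n) k).hasFDerivAt (x := x))
    simpa [coordT, pow_one, Function.comp_def, ContinuousLinearMap.coe_comp', ContinuousLinearMap.coe_fst', ContinuousLinearMap.proj_apply] using this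
  have h2 : HasFDerivAt (fun x : Pt n => (x.2 + D) ^ 2)
      ((2 * (x.2 + D)) • coordN (n := n)) x := by
    have := (hasDerivAt_pow 2 (x.2 + D)).comp_hasFDerivAt x
      (((coordN (n := n)).hasFDerivAt (x := x)).add_const D)
    simpa [coordN, pow_one, Function.comp_def] using this
  rw [show Qf n D = fun x : Pt n => nsqT x.1 + (x.2 + D) ^ 2 - 1 from rfl]
  simpa [Qf, nsqT, LQ] using (h1.add h2).sub_const 1

lemma LQ_applyT {n : ℕ} (D : ℝ) (x : Pt n) (i : Fin (n - 1)) :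
    LQ D x (Pi.single i 1, 0) = 2 * x.1 i := by
  classical
  simp only [LQ, coordT, coordN, ContinuousLinearMap.add_apply, ContinuousLinearMap.sum_apply,
    ContinuousLinearMap.smul_apply, ContinuousLinearMap.coe_comp', Function.comp_apply,
    ContinuousLinearMap.coe_fst', ContinuousLinearMap.coe_snd', ContinuousLinearMap.proj_apply,
    smul_eq_mul]
  rw [Finset.sum_eq_single i]
  · simp
  · intro b _ hb; simp [Pi.single_apply, hb.symm]
  · simp

lemma LQ_applyN {n : ℕ} (D : ℝ) (x : Pt n) :
    LQ D x ((0 : Fin (n-1) → ℝ), (1:ℝ)) = 2 * (x.2 + D) := by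
  classical
  simp [LQ, ContinuousLinearMap.sum_apply, coordT, coordN, smul_eq_mul]

def Uf (n : ℕ) (D C0 r : ℝ) : Pt n → ℝ := fun x => C0 * Qf n D x ^ r

lemma hasFDerivAt_U {n : ℕ} (D C0 r : ℝ) (x : Pt n) (hx : Qf n D x ≠ 0) :
    HasFDerivAt (Uf n D C0 r) ((C0 * (r * Qf n D x ^ (r - 1))) • LQ D x) x := by
  have h := (Real.hasDerivAt_rpow_const (x := Qf n D x) (p := r)
      (Or.inl hx)).comp_hasFDerivAt x (hasFDerivAt_Q D x)
  have h2 := h.const_mul C0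
  rw [show Uf n D C0 r = fun y : Pt n => C0 * Qf n D y ^ r from rfl]
  simpa [Uf, smul_smul] using h2

lemma pdT_U {n : ℕ} (D C0 r : ℝ) (x : Pt n) (hx : Qf n D x ≠ 0) (i : Fin (n - 1)) :
    pdT i (Uf n D C0 r) x = 2 * C0 * r * (Qf n D x ^ (r - 1) * x.1 i) := by
  rw [pdT, (hasFDerivAt_U D C0 r x hx).fderiv]
  rw [ContinuousLinearMap.smul_apply, LQ_applyT]
  simp only [smul_eq_mul]; ring

lemma pdN_U {n : ℕ} (D C0 r : ℝ) (x : Pt n) (hx : Qf n D x ≠ 0) :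
    pdN (Uf n D C0 r) x = 2 * C0 * r * (Qf n D x ^ (r - 1) * (x.2 + D)) := by
  rw [pdN, (hasFDerivAt_U D C0 r x hx).fderiv]
  rw [ContinuousLinearMap.smul_apply, LQ_applyN]
  simp only [smul_eq_mul]; ring

lemma contQ {n : ℕ} (D : ℝ) : Continuous (Qf n D) := by
  unfold Qf nsqT
  fun_prop

lemma pdT_pdT_U {n : ℕ} (D C0 r : ℝ) (x : Pt n) (hx : 0 < Qf n D x) (i j : Fin (n - 1)) :
    pdT j (pdT i (Uf n D C0 r)) x =
      (if i = j then 2 * C0 * r * Qf n D x ^ (r - 1) else 0) +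
        4 * C0 * r * (r - 1) * Qf n D x ^ (r - 2) * x.1 i * x.1 j := by
  classical
  have hopen : IsOpen {y : Pt n | 0 < Qf n D y} := isOpen_lt continuous_const (contQ D)
  set g : Pt n → ℝ := fun y => 2 * C0 * r * (Qf n D y ^ (r - 1) * y.1 i) with hg
  have hev : pdT i (Uf n D C0 r) =ᶠ[nhds x] g := by
    filter_upwards [hopen.mem_nhds hx] with y hy
    exact pdT_U D C0 r y (ne_of_gt hy) i
  have hfd : fderiv ℝ (pdT i (Uf n D C0 r)) x = fderiv ℝ g x := hev.fderiv_eq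
  have hQx : Qf n D x ≠ 0 := ne_of_gt hx
  have hpow : HasFDerivAt (fun y : Pt n => Qf n D y ^ (r - 1))
      (((r - 1) * Qf n D x ^ (r - 1 - 1)) • LQ D x) x :=
    (Real.hasDerivAt_rpow_const (x := Qf n D x) (p := r - 1)
      (Or.inl hQx)).comp_hasFDerivAt x (hasFDerivAt_Q D x)
  have hcoord : HasFDerivAt (fun y : Pt n => y.1 i) (coordT (n := n) i) x := by
    exact (coordT (n := n) i).hasFDerivAt (x := x)
  have hprod := (hpow.mul hcoord).const_mul (2 * C0 * r)
  have hgfd : fderiv ℝ g x = (2 * C0 * r) •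
      ((Qf n D x ^ (r - 1)) • coordT (n := n) i +
        x.1 i • (((r - 1) * Qf n D x ^ (r - 1 - 1)) • LQ D x)) := hprod.fderiv
  rw [pdT, hfd, hgfd]
  simp only [ContinuousLinearMap.smul_apply, ContinuousLinearMap.add_apply, smul_eq_mul,
    LQ_applyT]
  have hc : coordT (n := n) i (Pi.single j 1, 0) = if i = j then 1 else 0 := by
    simp [coordT, Pi.single_apply]
  rw [hc]
  have : r - 1 - 1 = r - 2 := by ring
  rw [this]
  split_ifs <;> ring

/-! ### Integrability -/

lemma finrank_Pt (n : ℕ) (hn : 1 ≤ n) : (Module.finrank ℝ (Pt n) : ℝ) = (n : ℝ) := by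
  have h1 : Module.finrank ℝ (Pt n) = Module.finrank ℝ (Fin (n-1) → ℝ) + Module.finrank ℝ ℝ :=
    Module.finrank_prod
  rw [h1, Module.finrank_pi, Module.finrank_self]
  have h2 : Fintype.card (Fin (n-1)) = n - 1 := Fintype.card_fin _
  rw [h2]
  have h3 : n - 1 + 1 = n := Nat.sub_add_cancel hn
  rw [h3]

lemma integrable_term {n : ℕ} (hn : 5 ≤ n) (D : ℝ) (hD : 1 < D) (r : ℝ)
    (hr : r = -(((n : ℝ) - 2) / 2)) (w : ℝ → ℝ → ℝ)
    (Cb : ℝ) (hCb : 0 ≤ Cb)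
    (hwc : ContinuousOn (fun x : Pt n => w (nsqT x.1) x.2) {x : Pt n | 0 < x.2})
    (hwb : ∀ s t : ℝ, 0 ≤ s → 0 < t →
      |w s t| ≤ Cb * (s + (t + D) ^ 2 - 1) ^ (2 * r - 1))
    (i j : Fin (n - 1)) :
    IntegrableOn (fun x : Pt n => x.1 i * x.1 j * w (nsqT x.1) x.2) {x : Pt n | 0 < x.2} := by
  have hn5 : (5 : ℝ) ≤ (n : ℝ) := by exact_mod_cast hn
  have hr_neg : 2 * r < 0 := by rw [hr]; linarith
  set S : Set (Pt n) := {x : Pt n | 0 < x.2} with hS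
  have hSopen : IsOpen S := isOpen_lt continuous_const continuous_snd
  have hSmeas : MeasurableSet S := hSopen.measurableSet
  set c : ℝ := min 1 (D ^ 2 - 1) with hc
  have hcpos : 0 < c := lt_min one_pos (by nlinarith)
  set Cfin : ℝ := Cb * (c ^ (2 * r) * (1 / 2) ^ (2 * r)) with hCfin
  have hdom : Integrable (fun x : Pt n => Cfin * (1 + ‖x‖) ^ (4 * r)) volume := by
    have hnr : (Module.finrank ℝ (Pt n) : ℝ) < 2 * ((n : ℝ) - 2) := by
      rw [finrank_Pt n (by omega)]; linarith
    rw [Measure.volume_eq_prod]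
    have h := integrable_one_add_norm (E := Pt n)
      (μ := (volume : Measure (Fin (n-1) → ℝ)).prod (volume : Measure ℝ)) hnr
    have : (fun x : Pt n => (1 + ‖x‖) ^ (-(2 * ((n : ℝ) - 2)))) =
        (fun x : Pt n => (1 + ‖x‖) ^ (4 * r)) := by
      funext x; congr 1; rw [hr]; ring
    rw [this] at h
    exact h.const_mul Cfin
  refine Integrable.mono' hdom.integrableOn ?_ ?_
  · refine ContinuousOn.aestronglyMeasurable ?_ hSmeas
    have h1 : Continuous fun x : Pt n => x.1 i * x.1 j :=
      ((continuous_apply i).comp continuous_fst).mul ((continuous_apply j).comp continuous_fst)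
    exact h1.continuousOn.mul hwc
  · rw [ae_restrict_iff' hSmeas]
    refine ae_of_all _ ?_
    intro x hx
    have ht : 0 < x.2 := hx
    set s : ℝ := nsqT x.1 with hs
    set t : ℝ := x.2 with htt
    set Q : ℝ := s + (t + D) ^ 2 - 1 with hQ
    have hs0 : 0 ≤ s := Finset.sum_nonneg fun k _ => sq_nonneg _
    have hQ1 : D ^ 2 - 1 ≤ Q := by nlinarith
    have hQpos : 0 < Q := by nlinarith
    have hQ2 : s + t ^ 2 ≤ Q := by nlinarith
    have hsq : ∀ k : Fin (n - 1), x.1 k ^ 2 ≤ s := by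
      intro k
      exact Finset.single_le_sum (f := fun k => x.1 k ^ 2) (fun k _ => sq_nonneg _)
        (Finset.mem_univ k)
    have hxij : |x.1 i * x.1 j| ≤ s := by
      have h1 : |x.1 i| ^ 2 ≤ s := by rw [sq_abs]; exact hsq i
      have h2 : |x.1 j| ^ 2 ≤ s := by rw [sq_abs]; exact hsq j
      have h3 : |x.1 i * x.1 j| = |x.1 i| * |x.1 j| := abs_mul _ _
      have h4 : |x.1 i| * |x.1 j| ≤ (|x.1 i| ^ 2 + |x.1 j| ^ 2) / 2 := by
        nlinarith [sq_nonneg (|x.1 i| - |x.1 j|)]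
      linarith
    have hnormsq : ‖x‖ ^ 2 ≤ s + t ^ 2 := by
      have hx1 : ‖x.1‖ ^ 2 ≤ s := by
        have hsqrt : ‖x.1‖ ≤ Real.sqrt s := by
          refine (pi_norm_le_iff_of_nonneg (Real.sqrt_nonneg s)).mpr fun k => ?_
          rw [Real.norm_eq_abs]
          exact Real.abs_le_sqrt (hsq k)
        calc ‖x.1‖ ^ 2 ≤ Real.sqrt s ^ 2 := by
              have h0 : (0:ℝ) ≤ ‖x.1‖ := norm_nonneg _
              nlinarith
          _ = s := Real.sq_sqrt hs0
      have hx2 : ‖x.2‖ ^ 2 = t ^ 2 := by rw [Real.norm_eq_abs, sq_abs]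
      have hxn : ‖x‖ = max ‖x.1‖ ‖x.2‖ := rfl
      rw [hxn]
      rcases max_cases ‖x.1‖ ‖x.2‖ with ⟨h, _⟩ | ⟨h, _⟩ <;> rw [h]
      · nlinarith
      · nlinarith
    have hQbound : Q ^ (2 * r) ≤ c ^ (2 * r) * (1 / 2) ^ (2 * r) * (1 + ‖x‖) ^ (4 * r) := by
      have step1 : c * ((1 / 2) * (1 + ‖x‖) ^ 2) ≤ Q := by
        have h1 : ((1:ℝ) / 2) * (1 + ‖x‖) ^ 2 ≤ 1 + ‖x‖ ^ 2 := by
          nlinarith [sq_nonneg (1 - ‖x‖)]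
        have h2 : c * ((1 / 2) * (1 + ‖x‖) ^ 2) ≤ c * (1 + ‖x‖ ^ 2) :=
          mul_le_mul_of_nonneg_left h1 hcpos.le
        have h3 : c * (1 + ‖x‖ ^ 2) ≤ c * (1 + (s + t ^ 2)) :=
          mul_le_mul_of_nonneg_left (by nlinarith) hcpos.le
        have h4 : c * (1 + (s + t ^ 2)) ≤ Q := by
          have hcle1 : c ≤ 1 := min_le_left _ _
          have hcle2 : c ≤ D ^ 2 - 1 := min_le_right _ _
          nlinarith
        linarith
      have hbase_pos : 0 < c * ((1 / 2) * (1 + ‖x‖) ^ 2) := by positivity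
      have step2 : Q ^ (2 * r) ≤ (c * ((1 / 2) * (1 + ‖x‖) ^ 2)) ^ (2 * r) :=
        Real.rpow_le_rpow_of_nonpos hbase_pos step1 hr_neg.le
      have step3 : (c * ((1 / 2) * (1 + ‖x‖) ^ 2)) ^ (2 * r)
          = c ^ (2 * r) * (1 / 2) ^ (2 * r) * ((1 + ‖x‖) ^ 2 : ℝ) ^ (2 * r) := by
        rw [Real.mul_rpow hcpos.le (by positivity), Real.mul_rpow (by norm_num) (by positivity),
          mul_assoc]
      have step4 : ((1 + ‖x‖) ^ 2 : ℝ) ^ (2 * r) = (1 + ‖x‖) ^ (4 * r) := by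
        rw [← Real.rpow_natCast (1 + ‖x‖) 2, ← Real.rpow_mul (by positivity)]
        norm_num
        ring_nf
      rw [step3, step4] at step2
      exact step2
    have hwx := hwb s t hs0 ht
    calc ‖x.1 i * x.1 j * w s t‖
        = |x.1 i * x.1 j| * |w s t| := by rw [norm_mul, Real.norm_eq_abs, Real.norm_eq_abs]
      _ ≤ s * (Cb * Q ^ (2 * r - 1)) := by
          apply mul_le_mul hxij hwx (abs_nonneg _) hs0
      _ ≤ Q * (Cb * Q ^ (2 * r - 1)) := by
          apply mul_le_mul_of_nonneg_right (le_trans (by nlinarith) hQ2) (by positivity)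
      _ = Cb * Q ^ (2 * r) := by
          rw [show (2 * r : ℝ) = (2 * r - 1) + 1 by ring, Real.rpow_add_one (ne_of_gt hQpos)]
          ring
      _ ≤ Cb * (c ^ (2 * r) * (1 / 2) ^ (2 * r) * (1 + ‖x‖) ^ (4 * r)) :=
          mul_le_mul_of_nonneg_left hQbound hCb
      _ = Cfin * (1 + ‖x‖) ^ (4 * r) := by rw [hCfin]; ring

/-! ### The two explicit radial weights -/

def wG (D C0 r cn : ℝ) : ℝ → ℝ → ℝ := fun s t =>
  (cn * (8 * C0 ^ 2 * r ^ 2 * (r - 1))) *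
    ((s + (t + D) ^ 2 - 1) ^ (r - 2) *
      (t ^ 2 * ((s + (t + D) ^ 2 - 1) ^ (r - 1) * (s + t * (t + D)))))

def wUU (D C0 r cn : ℝ) : ℝ → ℝ → ℝ := fun s t =>
  (cn * (4 * C0 ^ 2 * r * (r - 1))) *
    ((s + (t + D) ^ 2 - 1) ^ (r - 2) * (t ^ 2 * ((s + (t + D) ^ 2 - 1) ^ r)))

lemma q_facts (D s t : ℝ) (hD : 1 < D) (hs : 0 ≤ s) (ht : 0 < t) :
    0 < s + (t + D) ^ 2 - 1 ∧ D ^ 2 - 1 ≤ s + (t + D) ^ 2 - 1 ∧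
      t ^ 2 ≤ s + (t + D) ^ 2 - 1 ∧
      0 < s + t * (t + D) ∧
      s + t * (t + D) ≤ (1 + 1 / (D ^ 2 - 1)) * (s + (t + D) ^ 2 - 1) := by
  have hD1 : 0 < D ^ 2 - 1 := by nlinarith
  refine ⟨by nlinarith, by nlinarith, by nlinarith, by nlinarith, ?_⟩
  have h1 : s + t * (t + D) ≤ (s + (t + D) ^ 2 - 1) + 1 := by nlinarith
  have h2 : 1 ≤ (s + (t + D) ^ 2 - 1) / (D ^ 2 - 1) := by
    rw [le_div_iff₀ hD1]; nlinarith
  have h3 : (1 + 1 / (D ^ 2 - 1)) * (s + (t + D) ^ 2 - 1)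
      = (s + (t + D) ^ 2 - 1) + (s + (t + D) ^ 2 - 1) / (D ^ 2 - 1) := by
    field_simp
  rw [h3]
  linarith

lemma rpow_chain (q a : ℝ) (hq : 0 < q) :
    q ^ (a - 2) * q ^ (a - 1) * q * q = q ^ (2 * a - 1) := by
  rw [← Real.rpow_add hq, ← Real.rpow_add_one (ne_of_gt hq), ← Real.rpow_add_one (ne_of_gt hq)]
  congr 1
  ring

lemma wG_bound (D C0 r cn : ℝ) (hD : 1 < D) (s t : ℝ) (hs : 0 ≤ s) (ht : 0 < t) :
    |wG D C0 r cn s t| ≤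
      (|cn * (8 * C0 ^ 2 * r ^ 2 * (r - 1))| * (1 + 1 / (D ^ 2 - 1))) *
        (s + (t + D) ^ 2 - 1) ^ (2 * r - 1) := by
  obtain ⟨hq, hq1, hq2, hq3, hq4⟩ := q_facts D s t hD hs ht
  set q : ℝ := s + (t + D) ^ 2 - 1 with hqdef
  set KD : ℝ := 1 + 1 / (D ^ 2 - 1) with hKD
  have hKD0 : 0 < KD := by
    have : 0 < D ^ 2 - 1 := by nlinarith
    rw [hKD]; positivity
  have habs : |wG D C0 r cn s t| = |cn * (8 * C0 ^ 2 * r ^ 2 * (r - 1))| *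
      (q ^ (r - 2) * (t ^ 2 * (q ^ (r - 1) * (s + t * (t + D))))) := by
    rw [wG, abs_mul]
    congr 1
    rw [abs_of_nonneg]
    positivity
  rw [habs]
  have hP : q ^ (r - 2) * (t ^ 2 * (q ^ (r - 1) * (s + t * (t + D))))
      ≤ KD * q ^ (2 * r - 1) := by
    calc q ^ (r - 2) * (t ^ 2 * (q ^ (r - 1) * (s + t * (t + D))))
        ≤ q ^ (r - 2) * (q * (q ^ (r - 1) * (KD * q))) := by
          gcongr <;> exact (Real.rpow_pos_of_pos hq _).le
      _ = KD * (q ^ (r - 2) * q ^ (r - 1) * q * q) := by ring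
      _ = KD * q ^ (2 * r - 1) := by rw [rpow_chain q r hq]
  calc |cn * (8 * C0 ^ 2 * r ^ 2 * (r - 1))| *
      (q ^ (r - 2) * (t ^ 2 * (q ^ (r - 1) * (s + t * (t + D)))))
      ≤ |cn * (8 * C0 ^ 2 * r ^ 2 * (r - 1))| * (KD * q ^ (2 * r - 1)) :=
        mul_le_mul_of_nonneg_left hP (abs_nonneg _)
    _ = |cn * (8 * C0 ^ 2 * r ^ 2 * (r - 1))| * KD * q ^ (2 * r - 1) := by ring

lemma wUU_bound (D C0 r cn : ℝ) (hD : 1 < D) (s t : ℝ) (hs : 0 ≤ s) (ht : 0 < t) :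
    |wUU D C0 r cn s t| ≤
      |cn * (4 * C0 ^ 2 * r * (r - 1))| * (s + (t + D) ^ 2 - 1) ^ (2 * r - 1) := by
  obtain ⟨hq, hq1, hq2, hq3, hq4⟩ := q_facts D s t hD hs ht
  set q : ℝ := s + (t + D) ^ 2 - 1 with hqdef
  have habs : |wUU D C0 r cn s t| = |cn * (4 * C0 ^ 2 * r * (r - 1))| *
      (q ^ (r - 2) * (t ^ 2 * q ^ r)) := by
    rw [wUU, abs_mul]
    congr 1
    rw [abs_of_nonneg]
    positivity
  rw [habs]
  apply mul_le_mul_of_nonneg_left _ (abs_nonneg _)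
  calc q ^ (r - 2) * (t ^ 2 * q ^ r)
      ≤ q ^ (r - 2) * (q * q ^ r) := by
        gcongr
    _ = q ^ (r - 2) * q ^ r * q := by ring
    _ = q ^ (2 * r - 1) := by
        rw [← Real.rpow_add hq, ← Real.rpow_add_one (ne_of_gt hq)]
        congr 1
        ring

lemma cont_nsq {n : ℕ} : Continuous fun x : Pt n => nsqT x.1 := by
  unfold nsqT
  fun_prop

lemma Qpos_on {n : ℕ} (D : ℝ) (hD : 1 < D) :
    ∀ x : Pt n, x ∈ {x : Pt n | 0 < x.2} → nsqT x.1 + (x.2 + D) ^ 2 - 1 ≠ 0 := by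
  intro x hx
  have hs : 0 ≤ nsqT x.1 := Finset.sum_nonneg fun k _ => sq_nonneg _
  have ht : 0 < x.2 := hx
  have : 0 < nsqT x.1 + (x.2 + D) ^ 2 - 1 := by nlinarith
  exact ne_of_gt this

lemma Qcont' {n : ℕ} (D : ℝ) : Continuous fun x : Pt n => nsqT x.1 + (x.2 + D) ^ 2 - 1 := by
  have := cont_nsq (n := n)
  fun_prop

lemma wG_cont {n : ℕ} (D C0 r cn : ℝ) (hD : 1 < D) :
    ContinuousOn (fun x : Pt n => wG D C0 r cn (nsqT x.1) x.2) {x : Pt n | 0 < x.2} := by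
  unfold wG
  have hQ := (Qcont' (n := n) D).continuousOn (s := {x : Pt n | 0 < x.2})
  have h1 : ContinuousOn (fun x : Pt n => (nsqT x.1 + (x.2 + D) ^ 2 - 1) ^ (r - 2))
      {x : Pt n | 0 < x.2} := hQ.rpow_const fun x hx => Or.inl (Qpos_on D hD x hx)
  have h2 : ContinuousOn (fun x : Pt n => (nsqT x.1 + (x.2 + D) ^ 2 - 1) ^ (r - 1))
      {x : Pt n | 0 < x.2} := hQ.rpow_const fun x hx => Or.inl (Qpos_on D hD x hx)
  have h3 : Continuous fun x : Pt n => x.2 ^ 2 := by fun_prop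
  have h4 : Continuous fun x : Pt n => nsqT x.1 + x.2 * (x.2 + D) := by
    have := cont_nsq (n := n); fun_prop
  exact continuousOn_const.mul (h1.mul ((h3.continuousOn).mul (h2.mul h4.continuousOn)))

lemma wUU_cont {n : ℕ} (D C0 r cn : ℝ) (hD : 1 < D) :
    ContinuousOn (fun x : Pt n => wUU D C0 r cn (nsqT x.1) x.2) {x : Pt n | 0 < x.2} := by
  unfold wUU
  have hQ := (Qcont' (n := n) D).continuousOn (s := {x : Pt n | 0 < x.2})
  have h1 : ContinuousOn (fun x : Pt n => (nsqT x.1 + (x.2 + D) ^ 2 - 1) ^ (r - 2))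
      {x : Pt n | 0 < x.2} := hQ.rpow_const fun x hx => Or.inl (Qpos_on D hD x hx)
  have h2 : ContinuousOn (fun x : Pt n => (nsqT x.1 + (x.2 + D) ^ 2 - 1) ^ r)
      {x : Pt n | 0 < x.2} := hQ.rpow_const fun x hx => Or.inl (Qpos_on D hD x hx)
  have h3 : Continuous fun x : Pt n => x.2 ^ 2 := by fun_prop
  exact continuousOn_const.mul (h1.mul ((h3.continuousOn).mul h2))

lemma collect_sum {m : ℕ} (K : ℝ) (f : Fin m → Fin m → ℝ) :
    ∑ i, ∑ j, K * f i j = K * ∑ i, ∑ j, f i j := by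
  rw [Finset.mul_sum]
  exact Finset.sum_congr rfl fun i _ => (Finset.mul_sum _ _ _).symm

theorem stmt_8 (n : ℕ) (hn : 5 ≤ n) (K D : ℝ) (hK : K < 0) (hD : 1 < D)
    (cn : ℝ) (hcn : cn = 4 * ((n : ℝ) - 1) / ((n : ℝ) - 2))
    (A : Fin (n - 1) → Fin (n - 1) → Fin (n - 1) → Fin (n - 1) → ℝ)
    (B : Fin (n - 1) → Fin (n - 1) → ℝ)
    (hA1 : ∀ i k j l, A i k j l = -A k i j l)
    (hA2 : ∀ i k j l, A i k j l = -A i k l j)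
    (hA3 : ∀ i k j l, A i k j l = A j l i k)
    (hA4 : ∀ k l, ∑ i, A i k i l = 0)
    (hB1 : ∀ i j, B i j = B j i)
    (hB2 : ∑ i, B i i = 0)
    (U : Pt n → ℝ) (hU : U = bubble n K D)
    (E : Pt n → ℝ)
    (hE : E = fun x : Pt n =>
      cn * ∑ i, ∑ j,
        ((1 / 3) * (∑ k, ∑ l, A i k j l * x.1 k * x.1 l) + B i j * x.2 ^ 2) *
          pdT j (pdT i U) x)
    (xGradU : Pt n → ℝ)
    (hxGradU : xGradU = fun x : Pt n =>
      (∑ i, x.1 i * pdT i U x) + x.2 * pdN U x)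
    (jn : Pt n → ℝ)
    (hjn : jn = fun x : Pt n => ((2 - (n : ℝ)) / 2) * U x - xGradU x) :
    IntegrableOn (fun x : Pt n => E x * xGradU x) {x : Pt n | 0 < x.2} ∧
    (∫ x in {x : Pt n | 0 < x.2}, E x * xGradU x = 0) ∧
    ∫ x in {x : Pt n | 0 < x.2}, E x * jn x = 0 := by
  classical
  set C0 : ℝ := (4 * (n : ℝ) * ((n : ℝ) - 1)) ^ (((n : ℝ) - 2) / 4) *
    |K| ^ (-(((n : ℝ) - 2) / 4)) with hC0
  set r : ℝ := -(((n : ℝ) - 2) / 2) with hr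
  have hUeq : U = Uf n D C0 r := by
    rw [hU]; funext x; rfl
  have hSmeas : MeasurableSet {x : Pt n | 0 < x.2} :=
    (isOpen_lt continuous_const continuous_snd).measurableSet
  have hQpos : ∀ x : Pt n, 0 < x.2 → 0 < Qf n D x := by
    intro x hx
    have hs : 0 ≤ nsqT x.1 := Finset.sum_nonneg fun k _ => sq_nonneg _
    show 0 < nsqT x.1 + (x.2 + D) ^ 2 - 1
    nlinarith
  -- pointwise identity for E * xGradU
  have hEG : ∀ x : Pt n, 0 < x.2 →
      E x * xGradU x = ∑ i, ∑ j, B i j * (x.1 i * x.1 j * wG D C0 r cn (nsqT x.1) x.2) := by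
    intro x hx
    have hQ : 0 < Qf n D x := hQpos x hx
    have hQne : Qf n D x ≠ 0 := ne_of_gt hQ
    have hE2 : E x = cn * ((4 * C0 * r * (r - 1) * Qf n D x ^ (r - 2) * x.2 ^ 2) *
        ∑ i, ∑ j, B i j * (x.1 i * x.1 j)) := by
      rw [hE]
      simp only [hUeq, pdT_pdT_U D C0 r x hQ]
      rw [alg A B hA1 hA4 hB2 x.1 x.2 (2 * C0 * r * Qf n D x ^ (r - 1))
        (4 * C0 * r * (r - 1) * Qf n D x ^ (r - 2))]
    have hxg : xGradU x = 2 * C0 * r * Qf n D x ^ (r - 1) *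
        (nsqT x.1 + x.2 * (x.2 + D)) := by
      rw [hxGradU]
      simp only [hUeq, pdT_U D C0 r x hQne, pdN_U D C0 r x hQne]
      have h1 : ∀ i : Fin (n-1), x.1 i * (2 * C0 * r * (Qf n D x ^ (r - 1) * x.1 i))
          = (2 * C0 * r * Qf n D x ^ (r - 1)) * x.1 i ^ 2 := fun i => by ring
      simp only [h1]
      rw [← Finset.mul_sum]
      simp only [nsqT]
      ring
    rw [hE2, hxg]
    have hQrw : Qf n D x = nsqT x.1 + (x.2 + D) ^ 2 - 1 := rfl
    rw [hQrw]
    have h5 : (∑ i, ∑ j, B i j * (x.1 i * x.1 j * wG D C0 r cn (nsqT x.1) x.2))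
        = (cn * (4 * C0 * r * (r - 1) * (nsqT x.1 + (x.2 + D) ^ 2 - 1) ^ (r - 2) * x.2 ^ 2) *
            (2 * C0 * r * (nsqT x.1 + (x.2 + D) ^ 2 - 1) ^ (r - 1) *
              (nsqT x.1 + x.2 * (x.2 + D)))) *
          ∑ i, ∑ j, B i j * (x.1 i * x.1 j) := by
      rw [← collect_sum]
      refine Finset.sum_congr rfl fun i _ => ?_
      refine Finset.sum_congr rfl fun j _ => ?_
      simp only [wG]
      ring
    rw [h5]
    ring
  -- pointwise identity for E * U
  have hEU : ∀ x : Pt n, 0 < x.2 →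
      E x * U x = ∑ i, ∑ j, B i j * (x.1 i * x.1 j * wUU D C0 r cn (nsqT x.1) x.2) := by
    intro x hx
    have hQ : 0 < Qf n D x := hQpos x hx
    have hE2 : E x = cn * ((4 * C0 * r * (r - 1) * Qf n D x ^ (r - 2) * x.2 ^ 2) *
        ∑ i, ∑ j, B i j * (x.1 i * x.1 j)) := by
      rw [hE]
      simp only [hUeq, pdT_pdT_U D C0 r x hQ]
      rw [alg A B hA1 hA4 hB2 x.1 x.2 (2 * C0 * r * Qf n D x ^ (r - 1))
        (4 * C0 * r * (r - 1) * Qf n D x ^ (r - 2))]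
    have hUx : U x = C0 * Qf n D x ^ r := by rw [hUeq]; rfl
    rw [hE2, hUx]
    have hQrw : Qf n D x = nsqT x.1 + (x.2 + D) ^ 2 - 1 := rfl
    rw [hQrw]
    have h5 : (∑ i, ∑ j, B i j * (x.1 i * x.1 j * wUU D C0 r cn (nsqT x.1) x.2))
        = (cn * (4 * C0 * r * (r - 1) * (nsqT x.1 + (x.2 + D) ^ 2 - 1) ^ (r - 2) * x.2 ^ 2) *
            (C0 * (nsqT x.1 + (x.2 + D) ^ 2 - 1) ^ r)) *
          ∑ i, ∑ j, B i j * (x.1 i * x.1 j) := by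
      rw [← collect_sum]
      refine Finset.sum_congr rfl fun i _ => ?_
      refine Finset.sum_congr rfl fun j _ => ?_
      simp only [wUU]
      ring
    rw [h5]
    ring
  -- integrability of each term
  have hIntG : ∀ i j : Fin (n-1), IntegrableOn
      (fun x : Pt n => x.1 i * x.1 j * wG D C0 r cn (nsqT x.1) x.2) {x : Pt n | 0 < x.2} := by
    intro i j
    refine integrable_term hn D hD r hr (wG D C0 r cn)
      (|cn * (8 * C0 ^ 2 * r ^ 2 * (r - 1))| * (1 + 1 / (D ^ 2 - 1))) ?_
      (wG_cont D C0 r cn hD) (fun s t hs ht => wG_bound D C0 r cn hD s t hs ht) i j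
    have : 0 < D ^ 2 - 1 := by nlinarith
    positivity
  have hIntU : ∀ i j : Fin (n-1), IntegrableOn
      (fun x : Pt n => x.1 i * x.1 j * wUU D C0 r cn (nsqT x.1) x.2) {x : Pt n | 0 < x.2} := by
    intro i j
    exact integrable_term hn D hD r hr (wUU D C0 r cn)
      (|cn * (4 * C0 ^ 2 * r * (r - 1))|) (abs_nonneg _)
      (wUU_cont D C0 r cn hD) (fun s t hs ht => wUU_bound D C0 r cn hD s t hs ht) i j
  have hm : 0 < n - 1 := by omega
  have hG := sum_B_integral hm B hB2 (wG D C0 r cn) hIntG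
  have hUU := sum_B_integral hm B hB2 (wUU D C0 r cn) hIntU
  -- conclude
  have hEqOnG : Set.EqOn (fun x : Pt n =>
      ∑ i, ∑ j, B i j * (x.1 i * x.1 j * wG D C0 r cn (nsqT x.1) x.2))
      (fun x : Pt n => E x * xGradU x) {x : Pt n | 0 < x.2} :=
    fun x hx => (hEG x hx).symm
  have hEqOnU : Set.EqOn (fun x : Pt n =>
      ∑ i, ∑ j, B i j * (x.1 i * x.1 j * wUU D C0 r cn (nsqT x.1) x.2))
      (fun x : Pt n => E x * U x) {x : Pt n | 0 < x.2} :=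
    fun x hx => (hEU x hx).symm
  have hIntEG : IntegrableOn (fun x : Pt n => E x * xGradU x) {x : Pt n | 0 < x.2} :=
    hG.1.congr_fun hEqOnG hSmeas
  have hIntEU : IntegrableOn (fun x : Pt n => E x * U x) {x : Pt n | 0 < x.2} :=
    hUU.1.congr_fun hEqOnU hSmeas
  have hZG : ∫ x in {x : Pt n | 0 < x.2}, E x * xGradU x = 0 := by
    rw [← setIntegral_congr_fun hSmeas hEqOnG]
    exact hG.2
  have hZU : ∫ x in {x : Pt n | 0 < x.2}, E x * U x = 0 := by
    rw [← setIntegral_congr_fun hSmeas hEqOnU]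
    exact hUU.2
  refine ⟨hIntEG, hZG, ?_⟩
  have hsplit : ∀ x : Pt n, E x * jn x
      = ((2 - (n : ℝ)) / 2) * (E x * U x) - E x * xGradU x := by
    intro x
    rw [hjn]
    ring
  simp only [hsplit]
  rw [integral_sub (hIntEU.const_mul _) hIntEG]
  rw [MeasureTheory.integral_const_mul, hZU, hZG]
  ring
end
end

section
/- One has the exact evaluation ∫_{ℝⁿ₊} xₙ⁴ |x̃|² (|x̃|² + (xₙ+𝔇)² − 1)^{−n} dx = ω_{n−2} · ((n−3)/(n+1)) · Iₙ^{n+2} · φ̃_{(n−1)/2}, where ω_{n−2} is the surface measure of the unit sphere S^{n−2} ⊂ ℝ^{n−1}; all integrals converge. -/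
noncomputable section

open Real MeasureTheory
open Set Filter Topology

lemma aux_int_pow (n k : ℕ) (h : (k:ℝ) - 2*n < -1) :
    IntegrableOn (fun ρ : ℝ => ρ ^ k / (1 + ρ ^ 2) ^ n) (Set.Ioi 0) := by
  have hc : Continuous fun ρ : ℝ => ρ ^ k / (1 + ρ ^ 2) ^ n := by
    apply Continuous.div (by fun_prop) (by fun_prop)
    intro x; positivity
  have h1 : IntegrableOn (fun ρ : ℝ => ρ ^ k / (1 + ρ ^ 2) ^ n) (Ioc 0 1) :=
    (hc.integrableOn_Icc (a := 0) (b := 1)).mono_set Ioc_subset_Icc_self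
  have h2 : IntegrableOn (fun ρ : ℝ => ρ ^ k / (1 + ρ ^ 2) ^ n) (Ioi 1) := by
    apply Integrable.mono (g := fun ρ : ℝ => ρ ^ ((k:ℝ) - 2*n))
      (integrableOn_Ioi_rpow_of_lt h one_pos) hc.aestronglyMeasurable.restrict
    filter_upwards [ae_restrict_mem measurableSet_Ioi] with x hx
    have hx1 : (1:ℝ) ≤ x := le_of_lt hx
    have hx0 : (0:ℝ) < x := lt_of_lt_of_le one_pos hx1
    rw [Real.norm_eq_abs, Real.norm_eq_abs, abs_of_nonneg (by positivity),
      abs_of_nonneg (by positivity)]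
    have hb : (x ^ 2) ^ n ≤ (1 + x ^ 2) ^ n :=
      pow_le_pow_left₀ (by positivity) (by linarith) n
    calc x ^ k / (1 + x ^ 2) ^ n ≤ x ^ k / (x ^ 2) ^ n :=
          div_le_div_of_nonneg_left (by positivity) (by positivity) hb
      _ = x ^ ((k:ℝ) - 2*n) := by
          rw [← Real.rpow_natCast x k, ← pow_mul, ← Real.rpow_natCast x (2*n),
            ← Real.rpow_sub hx0]
          push_cast; ring_nf
  have : Ioi (0:ℝ) = Ioc 0 1 ∪ Ioi 1 := by
    rw [Ioc_union_Ioi_eq_Ioi]; norm_num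
  rw [this]
  exact h1.union h2

lemma aux_parts (n : ℕ) (hn : 7 ≤ n) :
    ((n:ℝ)+1) * ∫ ρ in Set.Ioi (0:ℝ), ρ^n/(1+ρ^2)^n
      = ((n:ℝ)-3) * ∫ ρ in Set.Ioi (0:ℝ), ρ^(n+2)/(1+ρ^2)^n := by
  obtain ⟨p, rfl⟩ : ∃ p, n = p + 7 := ⟨n - 7, by omega⟩
  set F : ℝ → ℝ := fun ρ => ρ^(p+8)/(1+ρ^2)^(p+6) with hF
  set F' : ℝ → ℝ := fun ρ => ((p+8)*ρ^(p+7) - (p+4)*ρ^(p+9))/(1+ρ^2)^(p+7) with hF'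
  have hden : ∀ x : ℝ, (0:ℝ) < 1 + x^2 := fun x => by positivity
  have hderiv : ∀ x : ℝ, HasDerivAt F (F' x) x := by
    intro x
    have h1 : HasDerivAt (fun ρ : ℝ => ρ^(p+8)) ((p+8)*x^(p+7)) x := by
      simpa using hasDerivAt_pow (p+8) x
    have h2 : HasDerivAt (fun ρ : ℝ => (1+ρ^2)^(p+6))
        ((p+6)*(1+x^2)^(p+5)*(2*x)) x := by
      have := ((hasDerivAt_pow 2 x).const_add 1).pow (p+6)
      simp at this; exact this
    have := h1.div h2 (by positivity)
    refine HasDerivAt.congr_deriv (f := F) this ?_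
    rw [hF']
    have hx : (1+x^2) ≠ 0 := ne_of_gt (hden x)
    field_simp
    ring
  have hcont : ContinuousWithinAt F (Ici 0) 0 := by
    apply Continuous.continuousWithinAt
    apply Continuous.div (by fun_prop) (by fun_prop)
    intro x; positivity
  have hint1 := aux_int_pow (p+7) (p+7) (by push_cast; linarith)
  have hint2 := aux_int_pow (p+7) (p+9) (by push_cast; linarith)
  have hF'eq : F' = fun ρ => ((p:ℝ)+8)*(ρ^(p+7)/(1+ρ^2)^(p+7))
      - ((p:ℝ)+4)*(ρ^(p+9)/(1+ρ^2)^(p+7)) := by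
    funext ρ; rw [hF']; ring
  have hintF' : IntegrableOn F' (Ioi 0) := by
    rw [hF'eq]
    exact (hint1.const_mul _).sub (hint2.const_mul _)
  have htend : Tendsto F atTop (𝓝 0) := by
    have hb : ∀ᶠ x : ℝ in atTop, F x ≤ x⁻¹ := by
      filter_upwards [eventually_ge_atTop (1:ℝ)] with x hx
      have hx0 : (0:ℝ) < x := lt_of_lt_of_le one_pos hx
      have hc : x^(p+8) * x ≤ (1+x^2)^(p+6) := by
        calc x^(p+8) * x = x^(p+9) := by ring
          _ ≤ x^(2*(p+6)) := pow_le_pow_right₀ hx (by omega)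
          _ = (x^2)^(p+6) := by rw [pow_mul]
          _ ≤ (1+x^2)^(p+6) := pow_le_pow_left₀ (by positivity) (by linarith) _
      calc F x ≤ x^(p+8) / (x^(p+8) * x) :=
            div_le_div_of_nonneg_left (by positivity) (by positivity) hc
        _ = x⁻¹ := by field_simp
    have hb0 : ∀ᶠ x : ℝ in atTop, 0 ≤ F x := by
      filter_upwards [eventually_ge_atTop (0:ℝ)] with x hx
      have : (0:ℝ) ≤ x := hx
      positivity
    exact tendsto_of_tendsto_of_tendsto_of_le_of_le' tendsto_const_nhds
      tendsto_inv_atTop_zero hb0 hb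
  have key : ∫ x in Ioi (0:ℝ), F' x = 0 - F 0 :=
    integral_Ioi_of_hasDerivAt_of_tendsto hcont (fun x _ => hderiv x) hintF' htend
  have hF0 : F 0 = 0 := by simp [hF]
  rw [hF0, sub_zero] at key
  rw [hF'eq] at key
  rw [integral_sub ((hint1.const_mul _)) ((hint2.const_mul _)),
    integral_const_mul, integral_const_mul] at key
  push_cast
  have e1 : ∀ ρ:ℝ, ρ^(p+7) = ρ^(p+7) := fun _ => rfl
  linarith [key]

lemma aux_t_int (n : ℕ) (hn : 7 ≤ n) (D : ℝ) (hD : 1 < D) :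
    IntegrableOn (fun t : ℝ => (t - D) ^ 4 * (t ^ 2 - 1) ^ (-(((n : ℝ) - 1) / 2)))
      (Set.Ioi D) := by
  set e : ℝ := ((n:ℝ) - 1) / 2 with he
  have h7 : (7:ℝ) ≤ n := by exact_mod_cast hn
  have hen : (0:ℝ) ≤ e := by rw [he]; linarith
  have h1 : IntegrableOn (fun t : ℝ => (t - D) ^ 4 * (t ^ 2 - 1) ^ (-e)) (Ioc D (D+2)) := by
    apply (ContinuousOn.integrableOn_Icc _).mono_set Ioc_subset_Icc_self
    apply ContinuousOn.mul (by fun_prop)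
    apply ContinuousOn.rpow_const (by fun_prop)
    intro t ht
    left
    have h1t : 1 < t := lt_of_lt_of_le hD ht.1
    nlinarith
  have h2 : IntegrableOn (fun t : ℝ => (t - D) ^ 4 * (t ^ 2 - 1) ^ (-e)) (Ioi (D+2)) := by
    have hD2 : (0:ℝ) < D + 2 := by linarith
    apply Integrable.mono (g := fun t : ℝ => (2:ℝ)^e * t ^ ((5:ℝ) - n))
      (((integrableOn_Ioi_rpow_of_lt (by
        linarith) hD2)).const_mul _)
    · apply Measurable.aestronglyMeasurable (by fun_prop)
    filter_upwards [ae_restrict_mem measurableSet_Ioi] with t ht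
    have htD : D + 2 < t := ht
    have ht3 : (3:ℝ) < t := by linarith
    have ht0 : (0:ℝ) < t := by linarith
    have hsq : (0:ℝ) < t^2/2 := by positivity
    have hstep1 : (t - D)^4 ≤ t^4 := by
      apply pow_le_pow_left₀ (by linarith) (by linarith)

    have hstep2 : (t^2 - 1) ^ (-e) ≤ (t^2/2) ^ (-e) := by
      apply Real.rpow_le_rpow_of_nonpos hsq (by nlinarith) (by linarith)
    have hval : (t^2/2) ^ (-e) = 2^e * t ^ (-(2*e)) := by
      rw [Real.div_rpow (by positivity) (by norm_num),
        Real.rpow_neg (by norm_num : (0:ℝ) ≤ 2) e, div_eq_mul_inv, inv_inv,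
        ← Real.rpow_natCast t 2, ← Real.rpow_mul ht0.le, mul_comm]
      congr 1
      push_cast; ring
    have hnorm1 : ‖(t - D) ^ 4 * (t ^ 2 - 1) ^ (-e)‖ = (t - D) ^ 4 * (t ^ 2 - 1) ^ (-e) := by
      rw [Real.norm_eq_abs, abs_of_nonneg]
      apply mul_nonneg (by positivity)
      apply Real.rpow_nonneg (by nlinarith)
    rw [hnorm1, Real.norm_eq_abs, abs_of_nonneg (by positivity)]
    calc (t - D) ^ 4 * (t ^ 2 - 1) ^ (-e) ≤ t^4 * ((t^2/2) ^ (-e)) := by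
          apply mul_le_mul hstep1 hstep2 (Real.rpow_nonneg (by nlinarith) _) (by positivity)
      _ = 2^e * (t^4 * t ^ (-(2*e))) := by rw [hval]; ring
      _ = 2^e * t ^ ((5:ℝ) - n) := by
          congr 1
          rw [← Real.rpow_natCast t 4, ← Real.rpow_add ht0]
          congr 1
          rw [he]; push_cast; ring
  have : Ioi D = Ioc D (D+2) ∪ Ioi (D+2) := by
    rw [Ioc_union_Ioi_eq_Ioi]; linarith
  rw [this]
  exact h1.union h2

lemma aux_shift (D : ℝ) (f : ℝ → ℝ) :
    ∫ s in Set.Ioi (0:ℝ), f (s + D) = ∫ t in Set.Ioi D, f t := by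
  rw [← integral_indicator measurableSet_Ioi, ← integral_indicator measurableSet_Ioi,
    ← integral_add_right_eq_self (fun t => Set.indicator (Set.Ioi D) f t) D]
  congr 1
  funext s
  by_cases h : 0 < s
  · rw [Set.indicator_of_mem (by simpa using h), Set.indicator_of_mem (by simp; linarith)]
  · rw [Set.indicator_of_notMem (by simpa using h),
      Set.indicator_of_notMem (by simp at h ⊢; linarith)]

lemma aux_inner (m n : ℕ) (hm : m + 1 = n) (hn : 7 ≤ n) {a : ℝ} (ha : 0 < a) :
    ∫ y : Fin m → ℝ, nsqT y / (nsqT y + a^2) ^ n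
      = ((m:ℝ) * (volume (Metric.ball (0 : EuclideanSpace ℝ (Fin m)) 1)).toReal)
        * (a ^ m)⁻¹ * ∫ ρ in Set.Ioi (0:ℝ), ρ^n/(1+ρ^2)^n := by
  haveI : Nonempty (Fin m) := ⟨⟨0, by omega⟩⟩
  set F : ℝ → ℝ := fun r => r^2 / (r^2 + a^2)^n with hF
  set G : (Fin m → ℝ) → ℝ := fun y => nsqT y / (nsqT y + a^2) ^ n with hG
  have h1 : ∫ y : Fin m → ℝ, G y
      = ∫ z : EuclideanSpace ℝ (Fin m), G (((MeasurableEquiv.toLp 2 (Fin m → ℝ)).symm) z) :=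
    ((EuclideanSpace.volume_preserving_symm_measurableEquiv_toLp (Fin m)).integral_comp
      ((MeasurableEquiv.toLp 2 (Fin m → ℝ)).symm).measurableEmbedding G).symm
  have h2 : ∀ z : EuclideanSpace ℝ (Fin m),
      G (((MeasurableEquiv.toLp 2 (Fin m → ℝ)).symm) z) = F ‖z‖ := by
    intro z
    have hz : ‖z‖^2 = ∑ i, (z i)^2 := by
      rw [EuclideanSpace.norm_eq, Real.sq_sqrt (by positivity)]
      simp [sq_abs]
    have hzz : nsqT (((MeasurableEquiv.toLp 2 (Fin m → ℝ)).symm) z) = ‖z‖^2 := by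
      rw [hz, nsqT]
      rfl
    rw [hG, hF]
    simp only [hzz]
  rw [show (fun z : EuclideanSpace ℝ (Fin m) =>
      G (((MeasurableEquiv.toLp 2 (Fin m → ℝ)).symm) z)) = fun z => F ‖z‖ from funext h2] at h1
  rw [h1, integral_fun_norm_addHaar volume F]
  rw [finrank_euclideanSpace_fin]
  -- now : m • (vol ball).toReal • ∫ r in Ioi 0, r ^ (m-1) • F r
  have h3 : ∫ r in Ioi (0:ℝ), r ^ (m-1) • F r = ∫ r in Ioi (0:ℝ), r^n / (r^2+a^2)^n := by
    apply setIntegral_congr_fun measurableSet_Ioi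
    intro r hr
    have hr0 : (0:ℝ) < r := hr
    simp only [hF, smul_eq_mul]
    rw [show r^(m-1) * (r^2/(r^2+a^2)^n) = r^(m-1) * r^2 / (r^2+a^2)^n from by ring,
      ← pow_add]
    congr 2
    omega
  have h4 : ∫ r in Ioi (0:ℝ), r^n / (r^2+a^2)^n
      = a * ((a^n/a^(2*n)) * ∫ ρ in Ioi (0:ℝ), ρ^n/(1+ρ^2)^n) := by
    have := integral_comp_mul_left_Ioi (fun r : ℝ => r^n / (r^2+a^2)^n) 0 ha
    rw [mul_zero] at this
    have h5 : ∀ x : ℝ, (a*x)^n / ((a*x)^2 + a^2)^n = (a^n/a^(2*n)) * (x^n/(1+x^2)^n) := by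
      intro x
      rw [show ((a*x)^2 + a^2) = a^2 * (1 + x^2) from by ring, mul_pow, mul_pow, ← pow_mul]
      have h6 : ((1:ℝ)+x^2)^n ≠ 0 := by positivity
      field_simp
    rw [show (fun x : ℝ => (a*x)^n / ((a*x)^2 + a^2)^n)
        = fun x => (a^n/a^(2*n)) * (x^n/(1+x^2)^n) from funext h5] at this
    rw [integral_const_mul, smul_eq_mul] at this
    beta_reduce at this
    rw [this]
    field_simp
  rw [h3, h4, nsmul_eq_mul, smul_eq_mul]
  have haux : a^n/a^(2*n) * a = (a^m)⁻¹ := by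
    have h7 : a ^ (2*n) = a^(n+1) * a^m := by rw [← pow_add]; congr 1; omega
    rw [h7]
    rw [show a^(n+1) = a^n * a from by ring]
    field_simp
  rw [measureReal_def]
  linear_combination ((m:ℝ) * (volume (Metric.ball (0 : EuclideanSpace ℝ (Fin m)) 1)).toReal
    * (∫ ρ in Set.Ioi (0:ℝ), ρ^n/(1+ρ^2)^n)) * haux

lemma nsqT_nonneg {m : ℕ} (y : Fin m → ℝ) : 0 ≤ nsqT y :=
  Finset.sum_nonneg fun i _ => sq_nonneg _

@[fun_prop] lemma measurable_nsqT (m : ℕ) : Measurable fun y : Fin m → ℝ => nsqT y := by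
  unfold nsqT
  fun_prop

lemma norm_sq_le_nsqT {m : ℕ} (hm : 0 < m) (y : Fin m → ℝ) : ‖y‖^2 ≤ nsqT y := by
  haveI : Nonempty (Fin m) := ⟨⟨0, hm⟩⟩
  obtain ⟨i, _, hi⟩ := Finset.exists_mem_eq_sup Finset.univ Finset.univ_nonempty
    (fun i => ‖y i‖₊)
  have h1 : ‖y‖ = |y i| := by
    rw [Pi.norm_def, hi]
    simp [Real.norm_eq_abs]
  rw [h1, sq_abs]
  exact Finset.single_le_sum (fun j _ => sq_nonneg (y j)) (Finset.mem_univ i)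

lemma nsqT_le {m : ℕ} (y : Fin m → ℝ) : nsqT y ≤ m * ‖y‖^2 := by
  calc nsqT y ≤ ∑ _i : Fin m, ‖y‖^2 := by
        apply Finset.sum_le_sum
        intro i _
        have := norm_le_pi_norm y i
        have h0 : (0:ℝ) ≤ ‖y i‖ := norm_nonneg _
        rw [Real.norm_eq_abs] at this
        nlinarith [abs_nonneg (y i), sq_abs (y i), neg_abs_le (y i)]
    _ = m * ‖y‖^2 := by simp [Finset.sum_const, nsmul_eq_mul]

set_option maxHeartbeats 1000000 in
lemma aux_prod_int (n : ℕ) (hn : 7 ≤ n) (D : ℝ) (hD : 1 < D) :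
    IntegrableOn (fun x : Pt n => x.2 ^ 4 * nsqT x.1 / (nsqT x.1 + (x.2 + D) ^ 2 - 1) ^ n)
      {x : Pt n | 0 < x.2} := by
  have h7 : (7:ℝ) ≤ n := by exact_mod_cast hn
  set m : ℕ := n - 1 with hmdef
  have hmcast : ((m:ℕ):ℝ) = (n:ℝ) - 1 := by
    rw [hmdef]
    have h1 : 1 ≤ n := by omega
    push_cast [h1]; ring
  set c : ℝ := D^2 - 1 with hcdef
  have hc : 0 < c := by rw [hcdef]; nlinarith
  set ε : ℝ := min c 1 / 2 with hεdef
  have hε : 0 < ε := by rw [hεdef]; positivity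
  set C : ℝ := (m:ℝ) / ε^n with hCdef
  have hC : 0 ≤ C := by positivity
  haveI : (volume : Measure (Pt n)).IsAddHaarMeasure := by
    rw [Measure.volume_eq_prod]; exact Measure.prod.instIsAddHaarMeasure _ _
  have hint : Integrable (fun x : Pt n => C * (1+‖x‖)^(-(2*(n:ℝ)-6))) := by
    apply Integrable.const_mul
    apply integrable_one_add_norm
    rw [Module.finrank_prod]
    simp only [Module.finrank_pi, Module.finrank_self, Fintype.card_fin]
    have h1 : 1 ≤ n := by omega
    rw [Nat.sub_add_cancel h1]
    linarith
  have hSmeas : MeasurableSet {x : Pt n | 0 < x.2} :=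
    measurableSet_lt measurable_const measurable_snd
  apply Integrable.mono hint.integrableOn
  · apply Measurable.aestronglyMeasurable
    fun_prop
  filter_upwards [ae_restrict_mem hSmeas] with x hx
  set s : ℝ := x.2 with hsdef
  set q : ℝ := nsqT x.1 with hqdef
  set r : ℝ := ‖x‖ with hrdef
  have hs : 0 < s := hx
  have hq0 : 0 ≤ q := nsqT_nonneg _
  have hr0 : 0 ≤ r := norm_nonneg _
  have h1r : 0 < 1 + r := by linarith
  have hsr : s ≤ r := by
    calc s ≤ |s| := le_abs_self s
      _ = ‖x.2‖ := (Real.norm_eq_abs _).symm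
      _ ≤ ‖x‖ := norm_snd_le x
  have hx1 : ‖x.1‖ ≤ r := norm_fst_le x
  have hx1q : ‖x.1‖^2 ≤ q := norm_sq_le_nsqT (by omega) x.1
  have hqm : q ≤ (m:ℝ) * r^2 := by
    calc q ≤ (m:ℝ) * ‖x.1‖^2 := nsqT_le x.1
      _ ≤ (m:ℝ) * r^2 := mul_le_mul_of_nonneg_left
          (pow_le_pow_left₀ (norm_nonneg _) hx1 2) (Nat.cast_nonneg m)
  have hrq : r^2 ≤ q + s^2 := by
    have hprod : r = max ‖x.1‖ ‖x.2‖ := rfl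
    have hs2 : ‖x.2‖^2 = s^2 := by rw [Real.norm_eq_abs, sq_abs]
    rcases le_total ‖x.1‖ ‖x.2‖ with h | h
    · rw [hprod, max_eq_right h]
      nlinarith
    · rw [hprod, max_eq_left h]
      nlinarith [sq_nonneg s, norm_nonneg x.2]
  set denom : ℝ := q + (s + D)^2 - 1 with hdenomdef
  have hdenom_pos : 0 < denom := by rw [hdenomdef]; nlinarith
  have hden : ε * (1+r)^2 ≤ denom := by
    have h1 : min c 1 ≤ c := min_le_left _ _
    have h2 : min c 1 ≤ 1 := min_le_right _ _
    have h3 : 0 < min c 1 := lt_min hc one_pos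
    rw [hdenomdef, hεdef]
    nlinarith [sq_nonneg (1 - r)]
  have hnum : s^4 * q ≤ (m:ℝ) * (1+r)^6 := by
    have h1 : s^4 ≤ r^4 := pow_le_pow_left₀ hs.le hsr 4
    have h2 : r^6 ≤ (1+r)^6 := pow_le_pow_left₀ hr0 (by linarith) 6
    calc s^4 * q ≤ r^4 * ((m:ℝ) * r^2) := by nlinarith [pow_nonneg hr0 4]
      _ = (m:ℝ) * r^6 := by ring
      _ ≤ (m:ℝ) * (1+r)^6 := by nlinarith [Nat.cast_nonneg (α := ℝ) m]
  have hfnn : 0 ≤ s ^ 4 * q / denom ^ n :=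
    div_nonneg (by positivity) (by positivity)
  have hkey : s ^ 4 * q / denom ^ n ≤ C * (1+r)^(-(2*(n:ℝ)-6)) := by
    have hstep : s ^ 4 * q / denom ^ n ≤ ((m:ℝ) * (1+r)^6) / (ε * (1+r)^2)^n := by
      apply div_le_div₀ (by positivity) hnum (by positivity)
      exact pow_le_pow_left₀ (by positivity) hden n
    refine hstep.trans (le_of_eq ?_)
    rw [mul_pow, ← pow_mul, hCdef]
    rw [show ((m:ℝ) * (1+r)^6) / (ε^n * (1+r)^(2*n))
        = ((m:ℝ)/ε^n) * ((1+r)^6 / (1+r)^(2*n)) from by ring]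
    congr 1
    rw [← Real.rpow_natCast (1+r) 6, ← Real.rpow_natCast (1+r) (2*n),
      ← Real.rpow_sub h1r]
    congr 1
    push_cast; ring
  rw [Real.norm_eq_abs, Real.norm_eq_abs, abs_of_nonneg hfnn,
    abs_of_nonneg (by positivity)]
  exact hkey

set_option maxHeartbeats 1000000 in
/-- `∫_{ℝⁿ₊} xₙ⁴ |x̃|² (|x̃|² + (xₙ+𝔇)² - 1)^{-n} dx
  = ω_{n-2} ((n-3)/(n+1)) Iₙ^{n+2} φ̃_{(n-1)/2}`,
where `ω_{n-2} = (n-1)·vol(B^{n-1})` is the surface measure of the unit sphere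
`S^{n-2} ⊂ ℝ^{n-1}`; all integrals converge. -/
theorem stmt_13 (n : ℕ) (hn : 7 ≤ n) (D : ℝ) (hD : 1 < D)
    (ω : ℝ)
    (hω : ω = ((n : ℝ) - 1) *
      (volume (Metric.ball (0 : EuclideanSpace ℝ (Fin (n - 1))) 1)).toReal) :
    IntegrableOn
      (fun x : Pt n => x.2 ^ 4 * nsqT x.1 / (nsqT x.1 + (x.2 + D) ^ 2 - 1) ^ n)
      {x : Pt n | 0 < x.2} ∧
    IntegrableOn (fun ρ : ℝ => ρ ^ (n + 2) / (1 + ρ ^ 2) ^ n) (Set.Ioi 0) ∧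
    IntegrableOn (fun t : ℝ => (t - D) ^ 4 * (t ^ 2 - 1) ^ (-(((n : ℝ) - 1) / 2)))
      (Set.Ioi D) ∧
    ∫ x in {x : Pt n | 0 < x.2},
        x.2 ^ 4 * nsqT x.1 / (nsqT x.1 + (x.2 + D) ^ 2 - 1) ^ n
      = ω * (((n : ℝ) - 3) / ((n : ℝ) + 1)) *
          (∫ ρ in Set.Ioi (0 : ℝ), ρ ^ (n + 2) / (1 + ρ ^ 2) ^ n) *
          ∫ t in Set.Ioi D, (t - D) ^ 4 * (t ^ 2 - 1) ^ (-(((n : ℝ) - 1) / 2)) := by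
  have h7 : (7:ℝ) ≤ n := by exact_mod_cast hn
  have hm1 : (n - 1) + 1 = n := by omega
  have hmcast : ((n - 1 : ℕ):ℝ) = (n:ℝ) - 1 := by
    have h1 : 1 ≤ n := by omega
    push_cast [Nat.cast_sub h1]; ring
  have hProd := aux_prod_int n hn D hD
  refine ⟨hProd, aux_int_pow n (n+2) (by push_cast; linarith), aux_t_int n hn D hD, ?_⟩
  set f : Pt n → ℝ :=
    fun x => x.2 ^ 4 * nsqT x.1 / (nsqT x.1 + (x.2 + D) ^ 2 - 1) ^ n with hfdef
  set Jn : ℝ := ∫ ρ in Set.Ioi (0:ℝ), ρ^n/(1+ρ^2)^n with hJndef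
  set V : ℝ := (volume (Metric.ball (0 : EuclideanSpace ℝ (Fin (n - 1))) 1)).toReal
    with hVdef
  -- rewrite the domain and measure
  have hS : {x : Pt n | 0 < x.2} = (univ : Set (Fin (n-1) → ℝ)) ×ˢ Ioi (0:ℝ) := by
    ext x; simp [Set.mem_prod]
  have hmeas : (volume : Measure (Pt n)).restrict {x : Pt n | 0 < x.2}
      = ((volume : Measure (Fin (n-1) → ℝ)).prod
          ((volume : Measure ℝ).restrict (Ioi 0))) := by
    rw [hS, Measure.volume_eq_prod, ← Measure.prod_restrict, Measure.restrict_univ]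
  have hProd' : Integrable f ((volume : Measure (Fin (n-1) → ℝ)).prod
      ((volume : Measure ℝ).restrict (Ioi 0))) := by
    rw [← hmeas]; exact hProd
  have hfub : ∫ x in {x : Pt n | 0 < x.2}, f x
      = ∫ s in Ioi (0:ℝ), ∫ y : Fin (n-1) → ℝ, f (y, s) := by
    rw [show (∫ x in {x : Pt n | 0 < x.2}, f x) = ∫ x, f x ∂((volume : Measure (Pt n)).restrict {x : Pt n | 0 < x.2}) from rfl,
      hmeas]
    exact integral_prod_symm f hProd'
  rw [hfub]
  -- inner integral evaluation
  have hinner : ∀ s ∈ Ioi (0:ℝ), (∫ y : Fin (n-1) → ℝ, f (y, s))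
      = ((n:ℝ) - 1) * V * Jn * (s ^ 4 * ((s+D)^2 - 1) ^ (-(((n:ℝ)-1)/2))) := by
    intro s hs
    have hs0 : 0 < s := hs
    have hc : 0 < (s+D)^2 - 1 := by nlinarith
    set a : ℝ := Real.sqrt ((s+D)^2 - 1) with hadef
    have ha : 0 < a := Real.sqrt_pos.2 hc
    have ha2 : a^2 = (s+D)^2 - 1 := Real.sq_sqrt hc.le
    have h1 : (fun y : Fin (n-1) → ℝ => f (y, s))
        = fun y => s ^ 4 * (nsqT y / (nsqT y + a^2) ^ n) := by
      funext y
      rw [hfdef]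
      simp only [ha2]
      ring
    rw [h1, integral_const_mul, aux_inner (n-1) n hm1 hn ha]
    have hpow : (a ^ (n-1))⁻¹ = ((s+D)^2 - 1) ^ (-(((n:ℝ)-1)/2)) := by
      rw [← Real.rpow_natCast a (n-1), hadef, Real.sqrt_eq_rpow,
        ← Real.rpow_mul hc.le, ← Real.rpow_neg hc.le]
      congr 1
      rw [hmcast]; ring
    rw [hpow, hmcast]
    ring
  rw [setIntegral_congr_fun measurableSet_Ioi hinner]
  -- pull out constants and shift
  have hpull : ∫ s in Ioi (0:ℝ),
      ((n:ℝ) - 1) * V * Jn * (s ^ 4 * ((s+D)^2 - 1) ^ (-(((n:ℝ)-1)/2)))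
      = ((n:ℝ) - 1) * V * Jn
        * ∫ s in Ioi (0:ℝ), s ^ 4 * ((s+D)^2 - 1) ^ (-(((n:ℝ)-1)/2)) :=
    integral_const_mul _ _
  rw [hpull]
  have hshift : ∫ s in Ioi (0:ℝ), s ^ 4 * ((s+D)^2 - 1) ^ (-(((n:ℝ)-1)/2))
      = ∫ t in Ioi D, (t - D) ^ 4 * (t^2 - 1) ^ (-(((n:ℝ)-1)/2)) := by
    rw [← aux_shift D (fun t => (t - D) ^ 4 * (t^2 - 1) ^ (-(((n:ℝ)-1)/2)))]
    congr 1
    funext s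
    simp
  rw [hshift]
  have hparts := aux_parts n hn
  rw [← hJndef] at hparts
  have hn1 : (n:ℝ) + 1 ≠ 0 := by linarith
  have hJn : Jn = ((n:ℝ)-3)/((n:ℝ)+1)
      * ∫ ρ in Ioi (0:ℝ), ρ^(n+2)/(1+ρ^2)^n := by
    rw [div_mul_eq_mul_div, eq_div_iff hn1]
    linear_combination hparts
  rw [hω, hJn]
  ring
end
end
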